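/- For a Jordan block J(λ,k) with |λ| < 1 and any complex number z with |z| = 1, the series Σ_{ℓ=0}^∞ (z J(λ,k))^ℓ converges, and equals the upper triangular matrix whose (i,j) entry (for i ≤ j) is z^{-1} q^{j-i+1}, where q = z/(1 - zλ). -/

import Mathlib

/-- The `k`-dimensional Jordan block with eigenvalue `l`. -/
def jordanBlock (l : ℂ) (k : ℕ) : Matrix (Fin k) (Fin k) ℂ :=
  fun i j => if i = j then l else if (i : ℕ) + 1 = (j : ℕ) then 1 else 0

lemma shift_pow (k d : ℕ) (i j : Fin k) :
    ((jordanBlock 0 k) ^ d) i j = if (i : ℕ) + d = (j : ℕ) then 1 else 0 := by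
  induction d generalizing i with
  | zero =>
    simp [Matrix.one_apply, Fin.ext_iff]
  | succ d ih =>
    rw [pow_succ', Matrix.mul_apply]
    have hN : ∀ p : Fin k, jordanBlock 0 k i p = if (i : ℕ) + 1 = (p : ℕ) then 1 else 0 := by
      intro p
      simp only [jordanBlock]
      rcases eq_or_ne i p with h | h
      · subst h; simp
      · simp [h]
    by_cases hik : (i : ℕ) + 1 < k
    · set p0 : Fin k := ⟨(i : ℕ) + 1, hik⟩ with hp0
      have key : ∀ p : Fin k, jordanBlock 0 k i p * ((jordanBlock 0 k) ^ d) p j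
          = if p = p0 then ((jordanBlock 0 k) ^ d) p j else 0 := by
        intro p
        rw [hN p]
        by_cases h : p = p0
        · subst h; simp [hp0]
        · have h' : (i : ℕ) + 1 ≠ (p : ℕ) := by
            intro hh
            exact h (by apply Fin.ext; simp [hp0, ← hh])
          simp [h', h]
      simp only [key]
      rw [Finset.sum_ite_eq' Finset.univ p0]
      simp only [Finset.mem_univ, if_true, ih]
      have : (p0 : ℕ) + d = (i : ℕ) + (d + 1) := by simp [hp0]; omega
      rw [this]
    · have hzz : ∀ p : Fin k, jordanBlock 0 k i p = 0 := by
        intro p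
        rw [hN]
        have : (i : ℕ) + 1 ≠ (p : ℕ) := by have := p.isLt; omega
        simp [this]
      have : (i : ℕ) + (d + 1) ≠ (j : ℕ) := by have := j.isLt; omega
      simp [hzz, this]

lemma jordan_pow (l : ℂ) (k m : ℕ) (i j : Fin k) :
    ((jordanBlock l k) ^ m) i j =
      if (i : ℕ) ≤ (j : ℕ) then
        (m.choose ((j : ℕ) - (i : ℕ)) : ℂ) * l ^ (m - ((j : ℕ) - (i : ℕ))) else 0 := by
  have hJ : jordanBlock l k = jordanBlock 0 k + l • (1 : Matrix (Fin k) (Fin k) ℂ) := by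
    ext a b
    rcases eq_or_ne a b with h | h
    · subst h; simp [jordanBlock, Matrix.one_apply]
    · simp [jordanBlock, Matrix.one_apply, h]
  have hcomm : Commute (jordanBlock 0 k) (l • (1 : Matrix (Fin k) (Fin k) ℂ)) :=
    (Commute.one_right (jordanBlock 0 k)).smul_right l
  rw [hJ, hcomm.add_pow]
  have hterm : ∀ d : ℕ, ((jordanBlock 0 k) ^ d * (l • (1 : Matrix (Fin k) (Fin k) ℂ)) ^ (m - d)
      * (m.choose d : Matrix (Fin k) (Fin k) ℂ))
      = ((m.choose d : ℂ) * l ^ (m - d)) • ((jordanBlock 0 k) ^ d) := by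
    intro d
    rw [smul_pow, one_pow]
    rw [Matrix.mul_smul, Matrix.mul_one]
    have : (m.choose d : Matrix (Fin k) (Fin k) ℂ)
        = ((m.choose d : ℂ)) • (1 : Matrix (Fin k) (Fin k) ℂ) := by
      rw [← Matrix.diagonal_natCast]
      ext a b
      by_cases h : a = b <;> simp [Matrix.diagonal_apply, Matrix.one_apply, h]
    rw [this, Matrix.smul_mul, Matrix.mul_smul, Matrix.mul_one, smul_smul, mul_comm]
  simp only [hterm]
  rw [Matrix.sum_apply]
  simp only [Matrix.smul_apply, shift_pow, smul_eq_mul]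
  by_cases hij : (i : ℕ) ≤ (j : ℕ)
  · by_cases hm : (j : ℕ) - (i : ℕ) ≤ m
    · rw [Finset.sum_eq_single ((j : ℕ) - (i : ℕ))]
      · have hc : (i : ℕ) + ((j : ℕ) - (i : ℕ)) = (j : ℕ) := by omega
        simp [hc, hij]
      · intro b _ hb
        have : (i : ℕ) + b ≠ (j : ℕ) := by omega
        simp [this]
      · intro h
        exact absurd (Finset.mem_range.mpr (by omega)) h
    · have h0 : ∀ b ∈ Finset.range (m + 1), ((m.choose b : ℂ) * l ^ (m - b))
          * (if (i : ℕ) + b = (j : ℕ) then (1:ℂ) else 0) = 0 := by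
        intro b hb
        rw [Finset.mem_range] at hb
        have : (i : ℕ) + b ≠ (j : ℕ) := by omega
        simp [this]
      rw [Finset.sum_congr rfl h0]
      have : m.choose ((j : ℕ) - (i : ℕ)) = 0 := Nat.choose_eq_zero_of_lt (by omega)
      simp [hij, this]
  · have h0 : ∀ b ∈ Finset.range (m + 1), ((m.choose b : ℂ) * l ^ (m - b))
        * (if (i : ℕ) + b = (j : ℕ) then (1:ℂ) else 0) = 0 := by
      intro b _
      have : (i : ℕ) + b ≠ (j : ℕ) := by omega
      simp [this]
    rw [Finset.sum_congr rfl h0]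
    simp [hij]

/-- For `‖l‖ < 1` and unimodular `z`, the Neumann series `Σ_{ℓ} (z J(l,k))^ℓ` converges
to the upper triangular matrix with `(i,j)` entry `z⁻¹ q^{j-i+1}` (for `i ≤ j`), where
`q = z / (1 - z l)`. -/
theorem jordan_block_geometric_series (l z : ℂ) (k : ℕ)
    (hl : ‖l‖ < 1) (hz : ‖z‖ = 1) :
    Filter.Tendsto (fun N => ∑ m ∈ Finset.range N, (z • jordanBlock l k) ^ m)
      Filter.atTop
      (nhds (fun i j => if (i : ℕ) ≤ (j : ℕ) then
        z⁻¹ * (z / (1 - z * l)) ^ ((j : ℕ) - (i : ℕ) + 1) else 0)) := by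
  have hzl : ‖z * l‖ < 1 := by rw [norm_mul, hz, one_mul]; exact hl
  have h1 : (1 : ℂ) - z * l ≠ 0 := by
    intro h
    rw [sub_eq_zero] at h
    rw [← h] at hzl
    simp at hzl
  have hz0 : z ≠ 0 := by intro h; rw [h] at hz; simp at hz
  refine tendsto_pi_nhds.mpr ?_
  intro i
  rw [tendsto_pi_nhds]
  intro j
  simp only [smul_pow, Matrix.sum_apply, Matrix.smul_apply, jordan_pow, smul_eq_mul]
  by_cases hij : (i : ℕ) ≤ (j : ℕ)
  · simp only [hij, if_true]
    set d : ℕ := (j : ℕ) - (i : ℕ) with hd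
    have H := (hasSum_choose_mul_geometric_of_norm_lt_one d hzl).mul_left (z ^ d)
    have H2 : HasSum (fun n : ℕ => z ^ (n + d) *
        (((n + d).choose d : ℂ) * l ^ (n + d - d))) (z ^ d * (1 / (1 - z * l) ^ (d + 1))) := by
      refine H.congr_fun fun n => ?_
      simp only [Nat.add_sub_cancel]
      rw [mul_pow, pow_add]
      ring
    have H3 := (hasSum_nat_add_iff
      (f := fun m => z ^ m * ((m.choose d : ℂ) * l ^ (m - d))) d).mp H2
    have hzero : ∑ n ∈ Finset.range d, z ^ n * ((n.choose d : ℂ) * l ^ (n - d)) = 0 := by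
      apply Finset.sum_eq_zero
      intro n hn
      rw [Finset.mem_range] at hn
      rw [Nat.choose_eq_zero_of_lt hn]
      simp
    rw [hzero, add_zero] at H3
    have hval : z⁻¹ * (z / (1 - z * l)) ^ (d + 1) = z ^ d * (1 / (1 - z * l) ^ (d + 1)) := by
      rw [div_pow]
      field_simp
      ring
    rw [hval]
    exact H3.tendsto_sum_nat
  · simp only [hij, if_false]
    have : (fun N => ∑ m ∈ Finset.range N, z ^ m * (0 : ℂ)) = fun _ => 0 := by
      funext N; simp
    rw [this]
    exact tendsto_const_nhds
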